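/- For every n ∈ ℕ with n ≥ 1 and each choice of sign ±, the supersymmetric Hermite polynomial 𝓗_{±n} satisfies the difference-differential equation −𝓗_{±n}′(−x) + x(𝓗_{±n}(x) − 𝓗_{±n}(−x)) = ±2√n · 𝓗_{±n}(x) for all x ∈ ℝ. -/

import Mathlib

open Polynomial

/-- The physicists' Hermite polynomial, via the Rodrigues formula
`H n x = (-1)^n e^(x²) (dⁿ/dxⁿ) e^(-x²)`. -/
noncomputable def physHermite (n : ℕ) (x : ℝ) : ℝ :=
    (-1 : ℝ) ^ n * Real.exp (x ^ 2) * iteratedDeriv n (fun y : ℝ => Real.exp (-y ^ 2)) x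

/-- The supersymmetric Hermite polynomial `𝓗_{εn} = H_{2n} + ε 2√n H_{2n-1}` for `n ≥ 1`
(with sign `ε = ±1`), and `𝓗₀ = 1`. -/
noncomputable def ssHermite (ε : ℝ) (n : ℕ) (x : ℝ) : ℝ :=
    if n = 0 then 1
    else physHermite (2 * n) x + ε * (2 * Real.sqrt n) * physHermite (2 * n - 1) x

noncomputable def pH : ℕ → Polynomial ℝ
  | 0 => 1
  | n + 1 => 2 * X * pH n - derivative (pH n)

lemma pH_succ (n : ℕ) : pH (n + 1) = 2 * X * pH n - derivative (pH n) := rfl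

lemma gauss_hasDerivAt (x : ℝ) :
    HasDerivAt (fun y : ℝ => Real.exp (-y ^ 2)) (-(2 * x) * Real.exp (-x ^ 2)) x := by
  have h : HasDerivAt (fun y : ℝ => -y ^ 2) (-(2 * x)) x := by
    have := (hasDerivAt_pow 2 x).fun_neg
    simpa using this
  simpa [mul_comm] using h.exp

lemma iterated_gauss (n : ℕ) (x : ℝ) :
    iteratedDeriv n (fun y : ℝ => Real.exp (-y ^ 2)) x
      = (-1 : ℝ) ^ n * (pH n).eval x * Real.exp (-x ^ 2) := by
  induction n generalizing x with
  | zero => simp [pH]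
  | succ n ih =>
    rw [iteratedDeriv_succ]
    have hfun : iteratedDeriv n (fun y : ℝ => Real.exp (-y ^ 2))
        = fun x => (-1 : ℝ) ^ n * (pH n).eval x * Real.exp (-x ^ 2) := funext ih
    rw [hfun]
    have h : HasDerivAt (fun x : ℝ => (-1 : ℝ) ^ n * (pH n).eval x * Real.exp (-x ^ 2))
        ((-1 : ℝ) ^ n * ((derivative (pH n)).eval x * Real.exp (-x ^ 2)
          + (pH n).eval x * (-(2 * x) * Real.exp (-x ^ 2)))) x := by
      have := (((pH n).hasDerivAt x).mul (gauss_hasDerivAt x)).const_mul ((-1 : ℝ) ^ n)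
      simpa [← mul_assoc] using this
    rw [h.deriv, pH_succ]
    simp only [eval_sub, eval_mul, eval_ofNat, eval_X]
    ring

lemma physHermite_eq (n : ℕ) (x : ℝ) : physHermite n x = (pH n).eval x := by
  unfold physHermite
  rw [iterated_gauss]
  have h1 : ((-1 : ℝ) ^ n) ^ 2 = 1 := by
    rw [← pow_mul, mul_comm n 2, pow_mul]; norm_num
  have : (-1 : ℝ) ^ n * Real.exp (x ^ 2) * ((-1) ^ n * eval x (pH n) * Real.exp (-x ^ 2))
      = ((-1 : ℝ) ^ n) ^ 2 * eval x (pH n) * (Real.exp (x ^ 2) * Real.exp (-x ^ 2)) := by ring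
  rw [this, h1, ← Real.exp_add]
  simp

lemma pH_comp_neg (n : ℕ) : (pH n).comp (-X) = (-1) ^ n * pH n := by
  induction n with
  | zero => simp [pH]
  | succ n ih =>
    have hd : (derivative (pH n)).comp (-X) = -((-1) ^ n * derivative (pH n)) := by
      have h1 := congrArg derivative ih
      rw [derivative_comp] at h1
      have h2 : derivative ((-1 : Polynomial ℝ) ^ n * pH n) = (-1) ^ n * derivative (pH n) := by
        rw [derivative_mul]
        simp [derivative_pow]
      rw [h2] at h1
      simp only [derivative_neg, derivative_X] at h1
      linear_combination -h1
    rw [pH_succ]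
    simp only [sub_comp, mul_comp, X_comp, ofNat_comp, hd, ih]
    ring

lemma pH_eval_neg (n : ℕ) (y : ℝ) : (pH n).eval (-y) = (-1) ^ n * (pH n).eval y := by
  have := congrArg (eval y) (pH_comp_neg n)
  simpa [eval_comp] using this

lemma pH_deriv_aux (n : ℕ) :
    derivative (pH n) = 2 * (n : Polynomial ℝ) * pH (n - 1)
      ∧ derivative (pH (n + 1)) = 2 * ((n : Polynomial ℝ) + 1) * pH n := by
  induction n with
  | zero =>
    refine ⟨by simp [pH], ?_⟩
    rw [pH_succ]
    simp [pH]
  | succ n ih =>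
    obtain ⟨h1, h2⟩ := ih
    have h2' : derivative (pH (n + 1)) = 2 * ((n : Polynomial ℝ) + 1) * pH n := h2
    refine ⟨by push_cast; exact h2, ?_⟩
    have hdd : derivative (2 * ((n : Polynomial ℝ) + 1) * pH n)
        = 2 * ((n : Polynomial ℝ) + 1) * (2 * (n : Polynomial ℝ) * pH (n - 1)) := by
      rw [derivative_mul, derivative_mul, h1]
      simp
    rw [pH_succ (n + 1), derivative_sub, derivative_mul, derivative_mul, h2', hdd,
      pH_succ n, h1]
    simp only [derivative_X, derivative_ofNat]
    push_cast
    ring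

/-- For `n ≥ 1` and each sign `ε = ±1`, the supersymmetric Hermite polynomial satisfies
the difference-differential equation
`-𝓗'_{εn}(-x) + x(𝓗_{εn}(x) - 𝓗_{εn}(-x)) = ε 2√n 𝓗_{εn}(x)`. -/
theorem ssHermite_diff_diff_eq (n : ℕ) (hn : 1 ≤ n) (ε : ℝ) (hε : ε = 1 ∨ ε = -1) (x : ℝ) :
    -(deriv (ssHermite ε n) (-x)) + x * (ssHermite ε n x - ssHermite ε n (-x)) =
      ε * (2 * Real.sqrt n) * ssHermite ε n x := by
  obtain ⟨m, rfl⟩ : ∃ m, n = m + 1 := ⟨n - 1, by omega⟩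
  set s : ℝ := Real.sqrt ((m : ℝ) + 1) with hs_def
  set c : ℝ := ε * (2 * s) with hc_def
  have hs : s ^ 2 = (m : ℝ) + 1 := Real.sq_sqrt (by positivity)
  have hsn : ((m + 1 : ℕ) : ℝ) = (m : ℝ) + 1 := by push_cast; ring
  have hss : ssHermite ε (m + 1)
      = fun y => (pH (2 * m + 2)).eval y + c * (pH (2 * m + 1)).eval y := by
    funext y
    have e1 : 2 * (m + 1) = 2 * m + 2 := by ring
    have e2 : 2 * m + 2 - 1 = 2 * m + 1 := by omega
    simp only [ssHermite, Nat.succ_ne_zero, if_false, e1, e2, physHermite_eq, hc_def, hsn,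
      hs_def]
  have d1 : derivative (pH (2 * m + 2)) = 2 * ((2 * m + 1 : ℕ) + 1 : Polynomial ℝ) * pH (2 * m + 1) := by
    have := (pH_deriv_aux (2 * m + 1)).2
    convert this using 2 <;> push_cast <;> ring
  have d2 : derivative (pH (2 * m + 1)) = 2 * ((2 * m : ℕ) + 1 : Polynomial ℝ) * pH (2 * m) := by
    have := (pH_deriv_aux (2 * m)).2
    convert this using 2
  have hder : deriv (ssHermite ε (m + 1)) (-x)
      = (derivative (pH (2 * m + 2))).eval (-x) + c * (derivative (pH (2 * m + 1))).eval (-x) := by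
    rw [hss]
    have h := ((pH (2 * m + 2)).hasDerivAt (-x)).add
      (((pH (2 * m + 1)).hasDerivAt (-x)).const_mul c)
    exact h.deriv
  rw [hder, hss]
  simp only [d1, d2, eval_mul, eval_add, eval_ofNat, eval_natCast, eval_one]
  rw [pH_eval_neg, pH_eval_neg, pH_eval_neg]
  have hrec : (pH (2 * m + 2)).eval x
      = 2 * x * (pH (2 * m + 1)).eval x - (2 * (2 * (m : ℝ) + 1)) * (pH (2 * m)).eval x := by
    have h := congrArg (eval x) (pH_succ (2 * m + 1))
    rw [d2] at h
    push_cast at h ⊢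
    simpa using h
  have hpow1 : (-1 : ℝ) ^ (2 * m + 2) = 1 := by
    rw [pow_add, pow_mul]; norm_num
  have hpow2 : (-1 : ℝ) ^ (2 * m + 1) = -1 := by
    rw [pow_add, pow_mul]; norm_num
  have hpow3 : (-1 : ℝ) ^ (2 * m) = 1 := by
    rw [pow_mul]; norm_num
  rw [hpow1, hpow2, hpow3]
  push_cast
  rcases hε with rfl | rfl
  · simp only [hc_def]
    linear_combination (-(2 * s)) * hrec + (-4 * (pH (2 * m + 1)).eval x) * hs
  · simp only [hc_def]
    linear_combination (2 * s) * hrec + (-4 * (pH (2 * m + 1)).eval x) * hs
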